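/- Let α, β ∈ ℂ. In the cubic Hecke algebra H(Q,3) over ℂ, the two-sided ideal I₃ generated by the element R₀ equals the ℂ-linear span of the three elements R₀, b₁·R₀ and b₁²·R₀. -/

import Mathlib

def braidRels (m : ℕ) : Set (FreeGroup (Fin m)) :=
  { r | (∃ i j : Fin m, (i : ℕ) + 1 < (j : ℕ) ∧
          r = FreeGroup.of i * FreeGroup.of j * (FreeGroup.of i)⁻¹ * (FreeGroup.of j)⁻¹) ∨
        (∃ i j : Fin m, (j : ℕ) = (i : ℕ) + 1 ∧
          r = FreeGroup.of i * FreeGroup.of j * FreeGroup.of i *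
              (FreeGroup.of j * FreeGroup.of i * FreeGroup.of j)⁻¹) }

abbrev BraidGroup (n : ℕ) := PresentedGroup (braidRels (n - 1))

def braidGen (n : ℕ) (i : Fin (n - 1)) : BraidGroup n := PresentedGroup.of i

theorem braid_mk_eq_one {m : ℕ} {r : FreeGroup (Fin m)} (hr : r ∈ braidRels m) :
    PresentedGroup.mk (braidRels m) r = 1 :=
  (QuotientGroup.eq_one_iff r).mpr (Subgroup.subset_normalClosure hr)

noncomputable def braidIncl (n : ℕ) : BraidGroup n →* BraidGroup (n + 1) :=
  PresentedGroup.toGroup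
    (f := fun i => braidGen (n + 1) (Fin.castLE (by omega : n - 1 ≤ n + 1 - 1) i))
    (by
      rintro r (⟨i, j, hij, rfl⟩ | ⟨i, j, hij, rfl⟩)
      · have h1 := braid_mk_eq_one (m := n + 1 - 1)
          (Or.inl ⟨Fin.castLE (by omega) i, Fin.castLE (by omega) j, by simpa using hij, rfl⟩)
        simp only [map_mul, map_inv, FreeGroup.lift_apply_of] at h1 ⊢
        exact h1
      · have h1 := braid_mk_eq_one (m := n + 1 - 1)
          (Or.inr ⟨Fin.castLE (by omega) i, Fin.castLE (by omega) j, by simpa using hij, rfl⟩)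
        simp only [map_mul, map_inv, FreeGroup.lift_apply_of] at h1 ⊢
        exact h1)

theorem braidIncl_gen (n : ℕ) (i : Fin (n - 1)) :
    braidIncl n (braidGen n i) = braidGen (n + 1) (Fin.castLE (by omega) i) :=
  PresentedGroup.toGroup.of _

variable (R : Type) [CommRing R]

noncomputable def gb (n : ℕ) (i : Fin (n - 1)) : MonoidAlgebra R (BraidGroup n) :=
  MonoidAlgebra.of R (BraidGroup n) (braidGen n i)

inductive cubicRel (α β : R) (n : ℕ) :
    MonoidAlgebra R (BraidGroup n) → MonoidAlgebra R (BraidGroup n) → Prop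
  | cube (i : Fin (n - 1)) :
      cubicRel α β n (gb R n i ^ 3) (α • gb R n i ^ 2 + β • gb R n i + 1)

abbrev CubicHecke (α β : R) (n : ℕ) := RingQuot (cubicRel R α β n)

noncomputable def hb (α β : R) (n : ℕ) (i : Fin (n - 1)) : CubicHecke R α β n :=
  RingQuot.mkAlgHom R (cubicRel R α β n) (gb R n i)

theorem mapDomain_gb (n : ℕ) (i : Fin (n - 1)) :
    (MonoidAlgebra.mapDomainAlgHom R R (braidIncl n)) (gb R n i)
      = gb R (n + 1) (Fin.castLE (by omega) i) := by
  simp only [gb, MonoidAlgebra.mapDomainAlgHom_apply, MonoidAlgebra.of_apply,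
    MonoidAlgebra.mapDomain_single, braidIncl_gen]

noncomputable def heckeIncl (α β : R) (n : ℕ) :
    CubicHecke R α β n →ₐ[R] CubicHecke R α β (n + 1) :=
  RingQuot.liftAlgHom R
    ⟨(RingQuot.mkAlgHom R (cubicRel R α β (n + 1))).comp
        (MonoidAlgebra.mapDomainAlgHom R R (braidIncl n)),
      by
        rintro x y ⟨i⟩
        have h2 : (MonoidAlgebra.mapDomainAlgHom R R (braidIncl n)) (gb R n i ^ 3)
            = gb R (n + 1) (Fin.castLE (by omega) i) ^ 3 := by
          rw [map_pow, mapDomain_gb]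
        have h3 : (MonoidAlgebra.mapDomainAlgHom R R (braidIncl n))
              (α • gb R n i ^ 2 + β • gb R n i + 1)
            = α • gb R (n + 1) (Fin.castLE (by omega) i) ^ 2
              + β • gb R (n + 1) (Fin.castLE (by omega) i) + 1 := by
          rw [map_add, map_add, map_smul, map_smul, map_pow, map_one, mapDomain_gb]
        simp only [AlgHom.comp_apply, h2, h3]
        exact RingQuot.mkAlgHom_rel R (cubicRel.cube _)⟩

theorem heckeIncl_gen (α β : R) (n : ℕ) (i : Fin (n - 1)) :
    heckeIncl R α β n (hb R α β n i) = hb R α β (n + 1) (Fin.castLE (by omega) i) := by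
  simp only [heckeIncl, hb, RingQuot.liftAlgHom_mkAlgHom_apply, AlgHom.comp_apply, mapDomain_gb]

noncomputable def R0elt {A : Type*} [Ring A] [Algebra R A] (α β : R) (x y : A) : A :=
  y * x ^ 2 * y
  + (β ^ 2 - α) • (x ^ 2 * y ^ 2 * x ^ 2)
  + (α ^ 2 - α * β ^ 2 - β) • (x * y ^ 2 * x ^ 2 + x ^ 2 * y ^ 2 * x)
  + (α ^ 2 - α * β ^ 2) • (x ^ 2 * y * x ^ 2)
  + (1 + 2 * α * β + α ^ 2 * β ^ 2 - α ^ 3) • (x * y ^ 2 * x)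
  + (1 + α * β + α ^ 2 * β ^ 2 - α ^ 3) • (x * y * x ^ 2 + x ^ 2 * y * x)
  + (1 + 2 * α * β - β ^ 3) • (y ^ 2 * x ^ 2 + x ^ 2 * y ^ 2)
  + (α * β ^ 3 - 2 * α - 2 * α ^ 2 * β) • (y * x ^ 2 + x ^ 2 * y)
  + (α * β ^ 3 - 2 * α - 2 * α ^ 2 * β + β ^ 2) • (y ^ 2 * x + x * y ^ 2)
  + (α ^ 4 - α ^ 3 * β ^ 2 - 2 * α ^ 2 * β - 3 * α) • (x * y * x)
  + (2 * α ^ 3 * β + 3 * α ^ 2 - α ^ 2 * β ^ 3 - α * β ^ 2) • (y * x + x * y)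
  + (β ^ 4 - 2 * β - 3 * α * β ^ 2 + α ^ 2) • (x ^ 2 + y ^ 2)
  + (1 + 4 * α * β + 3 * α ^ 2 * β ^ 2 - α ^ 3 - α * β ^ 4 - β ^ 3) • x
  + (1 + 3 * α * β + 3 * α ^ 2 * β ^ 2 - α ^ 3 - α * β ^ 4) • y
  + algebraMap R A (3 * β ^ 2 - β ^ 5 - 2 * α - 3 * α ^ 2 * β + 4 * α * β ^ 3)

theorem map_R0elt {A B : Type*} [Ring A] [Ring B] [Algebra R A] [Algebra R B]
    (f : A →ₐ[R] B) (α β : R) (x y : A) :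
    f (R0elt R α β x y) = R0elt R α β (f x) (f y) := by
  simp only [R0elt, map_add, map_mul, map_pow, map_smul, AlgHom.commutes]

inductive KRel (α β : R) (n : ℕ) : CubicHecke R α β n → CubicHecke R α β n → Prop
  | r0 (j : Fin (n - 1)) (h : (j : ℕ) + 1 < n - 1) :
      KRel α β n (R0elt R α β (hb R α β n j) (hb R α β n ⟨(j : ℕ) + 1, h⟩)) 0

abbrev KAlg (α β : R) (n : ℕ) := RingQuot (KRel R α β n)

noncomputable def towerIncl (α β : R) (n : ℕ) :
    KAlg R α β n →ₐ[R] KAlg R α β (n + 1) :=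
  RingQuot.liftAlgHom R
    ⟨(RingQuot.mkAlgHom R (KRel R α β (n + 1))).comp (heckeIncl R α β n),
      by
        rintro x y ⟨j, h⟩
        have hle : n - 1 ≤ n + 1 - 1 := by omega
        have hlt : ((Fin.castLE hle j : Fin (n + 1 - 1)) : ℕ) + 1 < n + 1 - 1 := by
          simp only [Fin.coe_castLE]; omega
        have e3 : Fin.castLE hle ⟨(j : ℕ) + 1, h⟩
            = (⟨((Fin.castLE hle j : Fin (n + 1 - 1)) : ℕ) + 1, hlt⟩ : Fin (n + 1 - 1)) := by
          ext; simp
        rw [AlgHom.comp_apply, AlgHom.comp_apply, map_R0elt R (heckeIncl R α β n),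
          heckeIncl_gen, heckeIncl_gen, e3, map_zero (heckeIncl R α β n)]
        exact RingQuot.mkAlgHom_rel R (KRel.r0 (Fin.castLE hle j) hlt)⟩

/-- The class of the inverse `b_{i+1}⁻¹` in the cubic Hecke algebra. -/
noncomputable def hbInv (α β : R) (n : ℕ) (i : Fin (n - 1)) : CubicHecke R α β n :=
  RingQuot.mkAlgHom R (cubicRel R α β n)
    (MonoidAlgebra.of R (BraidGroup n) (braidGen n i)⁻¹)

/-- The class of the generator `b_{i+1}` in `K_n(α,β)`. -/
noncomputable def kb (α β : R) (n : ℕ) (i : Fin (n - 1)) : KAlg R α β n :=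
  RingQuot.mkAlgHom R (KRel R α β n) (hb R α β n i)

/-- The class of `b_{i+1}⁻¹` in `K_n(α,β)`. -/
noncomputable def kbInv (α β : R) (n : ℕ) (i : Fin (n - 1)) : KAlg R α β n :=
  RingQuot.mkAlgHom R (KRel R α β n) (hbInv R α β n i)

/-- The iterated tower map `K_n(α,β) → K_{n+k}(α,β)`. -/
noncomputable def towerInclMany (α β : R) (n : ℕ) :
    (k : ℕ) → (KAlg R α β n →ₐ[R] KAlg R α β (n + k))
  | 0 => AlgHom.id R _
  | k + 1 => (towerIncl R α β (n + k)).comp (towerInclMany α β n k)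

/-- The class of the generator `b_n` in `K_{n+1}(α,β)` (for `n ≥ 1`). -/
noncomputable def lastGen (α β : R) (n : ℕ) (h : 1 ≤ n) : KAlg R α β (n + 1) :=
  kb R α β (n + 1) ⟨n - 1, by omega⟩

/-- The class of `b_n⁻¹` in `K_{n+1}(α,β)` (for `n ≥ 1`). -/
noncomputable def lastGenInv (α β : R) (n : ℕ) (h : 1 ≤ n) : KAlg R α β (n + 1) :=
  kbInv R α β (n + 1) ⟨n - 1, by omega⟩

/-- An admissible functional with parameters `(z, z̄)` on the tower of the algebras
`K_n(α,β)`: a compatible family of `R`-linear functionals satisfying the Markov-type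
conditions for the last generator and its inverse. -/
structure AdmissibleFunctional (α β z zbar : R) : Type _ where
  T : ∀ n : ℕ, KAlg R α β n →ₗ[R] R
  compat : ∀ (n : ℕ) (x : KAlg R α β n), T (n + 1) (towerIncl R α β n x) = T n x
  cond_z : ∀ (n : ℕ) (h : 1 ≤ n) (x y : KAlg R α β n),
      T (n + 1) (towerIncl R α β n x * lastGen R α β n h * towerIncl R α β n y)
        = z * T n (x * y)
  cond_zbar : ∀ (n : ℕ) (h : 1 ≤ n) (x y : KAlg R α β n),
      T (n + 1) (towerIncl R α β n x * lastGenInv R α β n h * towerIncl R α β n y)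
        = zbar * T n (x * y)

/-- A Markov trace is an admissible functional each of whose components is a trace. -/
def AdmissibleFunctional.IsMarkov {α β z zbar : R}
    (T : AdmissibleFunctional R α β z zbar) : Prop :=
  ∀ (n : ℕ) (a b : KAlg R α β n), T.T n (a * b) = T.T n (b * a)

/-- A normalized functional takes the value `1` on the unit of `K₁(α,β)`. -/
def AdmissibleFunctional.IsNormalized {α β z zbar : R}
    (T : AdmissibleFunctional R α β z zbar) : Prop :=
  T.T 1 1 = 1

/-- The generator `b₁` of `H(Q_{α,β},3)`. -/
noncomputable def bOne (α β : ℂ) : CubicHecke ℂ α β 3 := hb ℂ α β 3 ⟨0, by omega⟩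

/-- The generator `b₂` of `H(Q_{α,β},3)`. -/
noncomputable def bTwo (α β : ℂ) : CubicHecke ℂ α β 3 := hb ℂ α β 3 ⟨1, by omega⟩

/-- The element `R₀` of `H(Q_{α,β},3)`. -/
noncomputable def rZero (α β : ℂ) : CubicHecke ℂ α β 3 := R0elt ℂ α β (bOne α β) (bTwo α β)

set_option maxHeartbeats 4000000 in
set_option maxRecDepth 16000 in
lemma cert_yR0 {A : Type*} [Ring A] [Algebra ℂ A] (α β : ℂ) (x y : A)
    (hx : x*(x*x) - (α•(x*x)+β•x+1) = 0)
    (hy : y*(y*y) - (α•(y*y)+β•y+1) = 0)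
    (hb : y*(x*y) - x*(y*x) = 0) :
    y * R0elt ℂ α β x y = x * R0elt ℂ α β x y := by
  have key : y * R0elt ℂ α β x y = x * R0elt ℂ α β x y +
    (((2 : ℂ)*β^1 + (-1 : ℂ)*β^4 + (3 : ℂ)*α^1*β^2 + (-1 : ℂ)*α^2) • ((x*(x*x) - (α•(x*x)+β•x+1)))
      + ((2 : ℂ)*α^1 + (-1 : ℂ)*α^1*β^3 + (2 : ℂ)*α^2*β^1) • ((x*(x*x) - (α•(x*x)+β•x+1))*y)
      + ((-1 : ℂ) + (-1 : ℂ)*α^1*β^1 + (-1 : ℂ)*α^2*β^2 + (1 : ℂ)*α^3) • ((x*(x*x) - (α•(x*x)+β•x+1))*y*x)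
      + ((1 : ℂ)*β^1 + (-1 : ℂ)*β^4 + (3 : ℂ)*α^1*β^2 + (-1 : ℂ)*α^2) • ((x*(x*x) - (α•(x*x)+β•x+1))*y*x*x)
      + ((-1 : ℂ)*β^2 + (-1 : ℂ)*α^1*β^3 + (1 : ℂ)*α^2*β^1) • ((x*(x*x) - (α•(x*x)+β•x+1))*y*x*x*x)
      + ((1 : ℂ)*β^3 + (-1 : ℂ)*α^1*β^1) • ((x*(x*x) - (α•(x*x)+β•x+1))*y*x*x*x*x)
      + ((2 : ℂ)*α^1 + (-1 : ℂ)*α^1*β^3 + (2 : ℂ)*α^2*β^1) • ((x*(x*x) - (α•(x*x)+β•x+1))*y*x*x*y)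
      + ((-1 : ℂ)*α^1*β^1 + (-1 : ℂ)*α^2*β^2 + (1 : ℂ)*α^3) • ((x*(x*x) - (α•(x*x)+β•x+1))*y*x*x*y*x)
      + ((1 : ℂ)*α^1*β^2 + (-1 : ℂ)*α^2) • ((x*(x*x) - (α•(x*x)+β•x+1))*y*x*x*y*x*x)
      + ((-1 : ℂ) + (1 : ℂ)*β^3 + (-2 : ℂ)*α^1*β^1) • ((x*(x*x) - (α•(x*x)+β•x+1))*y*x*x*y*y)
      + ((1 : ℂ)*β^1 + (1 : ℂ)*α^1*β^2 + (-1 : ℂ)*α^2) • ((x*(x*x) - (α•(x*x)+β•x+1))*y*x*x*y*y*x)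
      + ((-1 : ℂ)*β^2 + (1 : ℂ)*α^1) • ((x*(x*x) - (α•(x*x)+β•x+1))*y*x*x*y*y*x*x)
      + ((-1 : ℂ) + (1 : ℂ)*β^3 + (-2 : ℂ)*α^1*β^1) • ((x*(x*x) - (α•(x*x)+β•x+1))*y*y)
      + ((1 : ℂ)*β^1 + (1 : ℂ)*α^1*β^2 + (-1 : ℂ)*α^2) • ((x*(x*x) - (α•(x*x)+β•x+1))*y*y*x)
      + ((-1 : ℂ)*β^2 + (1 : ℂ)*α^1) • ((x*(x*x) - (α•(x*x)+β•x+1))*y*y*x*x)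
      + ((-2 : ℂ)*β^1 + (1 : ℂ)*β^4 + (-3 : ℂ)*α^1*β^2 + (1 : ℂ)*α^2) • ((y*(y*y) - (α•(y*y)+β•y+1)))
      + ((1 : ℂ)*β^2 + (-2 : ℂ)*α^1 + (1 : ℂ)*α^1*β^3 + (-2 : ℂ)*α^2*β^1) • ((y*(y*y) - (α•(y*y)+β•y+1))*x)
      + ((1 : ℂ) + (-1 : ℂ)*β^3 + (2 : ℂ)*α^1*β^1) • ((y*(y*y) - (α•(y*y)+β•y+1))*x*x)
      + ((-1 : ℂ)*α^1*β^2 + (3 : ℂ)*α^2 + (-1 : ℂ)*α^2*β^3 + (2 : ℂ)*α^3*β^1) • ((y*(x*y) - x*(y*x)))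
      + ((-1 : ℂ)*β^2 + (1 : ℂ)*β^5 + (-3 : ℂ)*α^1 + (-2 : ℂ)*α^1*β^3 + (-2 : ℂ)*α^2*β^1 + (-1 : ℂ)*α^3*β^2 + (1 : ℂ)*α^4) • ((y*(x*y) - x*(y*x))*x)
      + ((1 : ℂ) + (1 : ℂ)*β^3 + (1 : ℂ)*α^1*β^1 + (1 : ℂ)*α^1*β^4 + (-1 : ℂ)*α^3) • ((y*(x*y) - x*(y*x))*x*x)
      + ((-1 : ℂ)*β^4 + (1 : ℂ)*α^1*β^2) • ((y*(x*y) - x*(y*x))*x*x*x)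
      + ((-1 : ℂ)*β^1) • ((y*(x*y) - x*(y*x))*x*x*y)
      + ((1 : ℂ) + (-1 : ℂ)*α^1*β^1 + (1 : ℂ)*α^1*β^4 + (-2 : ℂ)*α^2*β^2) • ((y*(x*y) - x*(y*x))*x*y)
      + ((1 : ℂ)*α^1*β^2 + (1 : ℂ)*α^2*β^3 + (-1 : ℂ)*α^3*β^1) • ((y*(x*y) - x*(y*x))*x*y*x)
      + ((-1 : ℂ)*α^1*β^3 + (1 : ℂ)*α^2*β^1) • ((y*(x*y) - x*(y*x))*x*y*x*x)
      + ((-1 : ℂ)*α^1) • ((y*(x*y) - x*(y*x))*x*y*x*y)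
      + ((1 : ℂ)) • ((y*(x*y) - x*(y*x))*x*y*x*y*x)
      + ((1 : ℂ)*β^1 + (-1 : ℂ)*β^4 + (2 : ℂ)*α^1*β^2) • ((y*(x*y) - x*(y*x))*x*y*y)
      + ((-1 : ℂ)*β^2 + (-1 : ℂ)*α^1*β^3 + (1 : ℂ)*α^2*β^1) • ((y*(x*y) - x*(y*x))*x*y*y*x)
      + ((1 : ℂ)*β^3 + (-1 : ℂ)*α^1*β^1) • ((y*(x*y) - x*(y*x))*x*y*y*x*x)
      + ((1 : ℂ)*β^2 + (-2 : ℂ)*α^1 + (1 : ℂ)*α^1*β^3 + (-2 : ℂ)*α^2*β^1) • ((y*(x*y) - x*(y*x))*y)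
      + ((1 : ℂ) + (2 : ℂ)*α^1*β^1 + (1 : ℂ)*α^2*β^2 + (-1 : ℂ)*α^3) • ((y*(x*y) - x*(y*x))*y*x)
      + ((-1 : ℂ)*β^1 + (-1 : ℂ)*α^1*β^2 + (1 : ℂ)*α^2) • ((y*(x*y) - x*(y*x))*y*x*x)
      + ((-2 : ℂ)*α^1 + (1 : ℂ)*α^1*β^3 + (-2 : ℂ)*α^2*β^1) • (x*(y*(x*y) - x*(y*x)))
      + ((1 : ℂ) + (1 : ℂ)*α^1*β^4 + (-1 : ℂ)*α^2*β^2 + (-1 : ℂ)*α^3) • (x*(y*(x*y) - x*(y*x))*x)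
      + ((1 : ℂ)*α^2 + (1 : ℂ)*α^2*β^3 + (-1 : ℂ)*α^3*β^1) • (x*(y*(x*y) - x*(y*x))*x*x)
      + ((-1 : ℂ)*α^1*β^3 + (1 : ℂ)*α^2*β^1) • (x*(y*(x*y) - x*(y*x))*x*x*x)
      + ((-2 : ℂ)*α^2 + (1 : ℂ)*α^2*β^3 + (-2 : ℂ)*α^3*β^1) • (x*(y*(x*y) - x*(y*x))*x*y)
      + ((1 : ℂ)*α^1 + (1 : ℂ)*α^2*β^1 + (1 : ℂ)*α^3*β^2 + (-1 : ℂ)*α^4) • (x*(y*(x*y) - x*(y*x))*x*y*x)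
      + ((-1 : ℂ)*α^2*β^2 + (1 : ℂ)*α^3) • (x*(y*(x*y) - x*(y*x))*x*y*x*x)
      + ((1 : ℂ)*α^1 + (-1 : ℂ)*α^1*β^3 + (2 : ℂ)*α^2*β^1) • (x*(y*(x*y) - x*(y*x))*x*y*y)
      + ((-1 : ℂ)*α^1*β^1 + (-1 : ℂ)*α^2*β^2 + (1 : ℂ)*α^3) • (x*(y*(x*y) - x*(y*x))*x*y*y*x)
      + ((1 : ℂ)*α^1*β^2 + (-1 : ℂ)*α^2) • (x*(y*(x*y) - x*(y*x))*x*y*y*x*x)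
      + ((1 : ℂ)*β^1 + (-1 : ℂ)*β^4 + (2 : ℂ)*α^1*β^2) • (x*x*(y*(x*y) - x*(y*x))*x)
      + ((-1 : ℂ)*β^2 + (-1 : ℂ)*α^1*β^3 + (1 : ℂ)*α^2*β^1) • (x*x*(y*(x*y) - x*(y*x))*x*x)
      + ((1 : ℂ)*β^3 + (-1 : ℂ)*α^1*β^1) • (x*x*(y*(x*y) - x*(y*x))*x*x*x)
      + ((2 : ℂ)*α^1 + (-1 : ℂ)*α^1*β^3 + (2 : ℂ)*α^2*β^1) • (x*x*(y*(x*y) - x*(y*x))*x*y)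
      + ((-1 : ℂ)*α^1*β^1 + (-1 : ℂ)*α^2*β^2 + (1 : ℂ)*α^3) • (x*x*(y*(x*y) - x*(y*x))*x*y*x)
      + ((1 : ℂ)*α^1*β^2 + (-1 : ℂ)*α^2) • (x*x*(y*(x*y) - x*(y*x))*x*y*x*x)
      + ((-1 : ℂ) + (1 : ℂ)*β^3 + (-2 : ℂ)*α^1*β^1) • (x*x*(y*(x*y) - x*(y*x))*x*y*y)
      + ((1 : ℂ)*β^1 + (1 : ℂ)*α^1*β^2 + (-1 : ℂ)*α^2) • (x*x*(y*(x*y) - x*(y*x))*x*y*y*x)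
      + ((-1 : ℂ)*β^2 + (1 : ℂ)*α^1) • (x*x*(y*(x*y) - x*(y*x))*x*y*y*x*x)
      + ((-1 : ℂ)*α^1*β^2 + (1 : ℂ)*α^2) • (x*x*y*(x*(x*x) - (α•(x*x)+β•x+1)))
      + ((1 : ℂ) + (-1 : ℂ)*β^3 + (2 : ℂ)*α^1*β^1) • (x*x*y*(x*(x*x) - (α•(x*x)+β•x+1))*y*x)
      + ((-1 : ℂ)*β^1 + (-1 : ℂ)*α^1*β^2 + (1 : ℂ)*α^2) • (x*x*y*(x*(x*x) - (α•(x*x)+β•x+1))*y*x*x)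
      + ((1 : ℂ)*β^2 + (-1 : ℂ)*α^1) • (x*x*y*(x*(x*x) - (α•(x*x)+β•x+1))*y*x*x*x)
      + ((-2 : ℂ)*α^1 + (1 : ℂ)*α^1*β^3 + (-2 : ℂ)*α^2*β^1) • (x*x*y*x*(y*(x*y) - x*(y*x)))
      + ((1 : ℂ)*α^1*β^1 + (1 : ℂ)*α^2*β^2 + (-1 : ℂ)*α^3) • (x*x*y*x*(y*(x*y) - x*(y*x))*x)
      + ((-1 : ℂ)*α^1*β^2 + (1 : ℂ)*α^2) • (x*x*y*x*(y*(x*y) - x*(y*x))*x*x)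
      + ((1 : ℂ) + (-1 : ℂ)*β^3 + (2 : ℂ)*α^1*β^1) • (x*x*y*x*(y*(x*y) - x*(y*x))*y)
      + ((-1 : ℂ)*β^1 + (-1 : ℂ)*α^1*β^2 + (1 : ℂ)*α^2) • (x*x*y*x*(y*(x*y) - x*(y*x))*y*x)
      + ((1 : ℂ)*β^2 + (-1 : ℂ)*α^1) • (x*x*y*x*(y*(x*y) - x*(y*x))*y*x*x)
      + ((1 : ℂ) + (-1 : ℂ)*β^3 + (2 : ℂ)*α^1*β^1) • (x*x*y*x*x*(y*(x*y) - x*(y*x)))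
      + ((-1 : ℂ)*β^1 + (-1 : ℂ)*α^1*β^2 + (1 : ℂ)*α^2) • (x*x*y*x*x*(y*(x*y) - x*(y*x))*x)
      + ((1 : ℂ)*β^2 + (-1 : ℂ)*α^1) • (x*x*y*x*x*(y*(x*y) - x*(y*x))*x*x)
      + ((1 : ℂ)*β^2 + (-1 : ℂ)*α^1) • (x*x*y*y*(x*(x*x) - (α•(x*x)+β•x+1)))
      + ((1 : ℂ) + (1 : ℂ)*α^1*β^1 + (1 : ℂ)*α^2*β^2 + (-1 : ℂ)*α^3) • (x*y*(x*(x*x) - (α•(x*x)+β•x+1)))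
      + ((-1 : ℂ)*β^1) • (x*y*(x*(x*x) - (α•(x*x)+β•x+1))*y)
      + ((-2 : ℂ)*α^1 + (1 : ℂ)*α^1*β^3 + (-2 : ℂ)*α^2*β^1) • (x*y*(x*(x*x) - (α•(x*x)+β•x+1))*y*x)
      + ((1 : ℂ) + (1 : ℂ)*α^1*β^1 + (1 : ℂ)*α^2*β^2 + (-1 : ℂ)*α^3) • (x*y*(x*(x*x) - (α•(x*x)+β•x+1))*y*x*x)
      + ((-1 : ℂ)*α^1*β^2 + (1 : ℂ)*α^2) • (x*y*(x*(x*x) - (α•(x*x)+β•x+1))*y*x*x*x)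
      + ((2 : ℂ)*α^2 + (-1 : ℂ)*α^2*β^3 + (2 : ℂ)*α^3*β^1) • (x*y*x*(y*(x*y) - x*(y*x)))
      + ((-1 : ℂ)*α^1 + (-1 : ℂ)*α^2*β^1 + (-1 : ℂ)*α^3*β^2 + (1 : ℂ)*α^4) • (x*y*x*(y*(x*y) - x*(y*x))*x)
      + ((1 : ℂ)*α^2*β^2 + (-1 : ℂ)*α^3) • (x*y*x*(y*(x*y) - x*(y*x))*x*x)
      + ((-1 : ℂ)*α^1 + (1 : ℂ)*α^1*β^3 + (-2 : ℂ)*α^2*β^1) • (x*y*x*(y*(x*y) - x*(y*x))*y)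
      + ((1 : ℂ)*α^1*β^1 + (1 : ℂ)*α^2*β^2 + (-1 : ℂ)*α^3) • (x*y*x*(y*(x*y) - x*(y*x))*y*x)
      + ((-1 : ℂ)*α^1*β^2 + (1 : ℂ)*α^2) • (x*y*x*(y*(x*y) - x*(y*x))*y*x*x)
      + ((-2 : ℂ)*α^1 + (1 : ℂ)*α^1*β^3 + (-2 : ℂ)*α^2*β^1) • (x*y*x*x*(y*(x*y) - x*(y*x)))
      + ((1 : ℂ) + (1 : ℂ)*α^1*β^1 + (1 : ℂ)*α^2*β^2 + (-1 : ℂ)*α^3) • (x*y*x*x*(y*(x*y) - x*(y*x))*x)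
      + ((-1 : ℂ)*α^1*β^2 + (1 : ℂ)*α^2) • (x*y*x*x*(y*(x*y) - x*(y*x))*x*x)
      + ((-1 : ℂ)*α^1*β^2 + (1 : ℂ)*α^2) • (x*y*y*(x*(x*x) - (α•(x*x)+β•x+1)))
      + ((-1 : ℂ)*β^2) • (y*(x*(x*x) - (α•(x*x)+β•x+1)))
      + ((1 : ℂ)*β^3 + (-1 : ℂ)*α^1*β^1) • (y*(x*(x*x) - (α•(x*x)+β•x+1))*x)
      + ((-1 : ℂ)*β^1 + (1 : ℂ)*β^4 + (-2 : ℂ)*α^1*β^2) • (y*(x*(x*x) - (α•(x*x)+β•x+1))*y*x)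
      + ((1 : ℂ)*β^2 + (1 : ℂ)*α^1*β^3 + (-1 : ℂ)*α^2*β^1) • (y*(x*(x*x) - (α•(x*x)+β•x+1))*y*x*x)
      + ((-1 : ℂ)*β^3 + (1 : ℂ)*α^1*β^1) • (y*(x*(x*x) - (α•(x*x)+β•x+1))*y*x*x*x)
      + ((-1 : ℂ)) • (y*(x*(x*x) - (α•(x*x)+β•x+1))*y*x*x*y)
      + ((-1 : ℂ) + (1 : ℂ)*α^1*β^1 + (-1 : ℂ)*α^1*β^4 + (2 : ℂ)*α^2*β^2) • (y*x*(y*(x*y) - x*(y*x)))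
      + ((-1 : ℂ)*α^1*β^2 + (-1 : ℂ)*α^2*β^3 + (1 : ℂ)*α^3*β^1) • (y*x*(y*(x*y) - x*(y*x))*x)
      + ((1 : ℂ)*α^1*β^3 + (-1 : ℂ)*α^2*β^1) • (y*x*(y*(x*y) - x*(y*x))*x*x)
      + ((1 : ℂ)*α^1) • (y*x*(y*(x*y) - x*(y*x))*x*y)
      + ((-1 : ℂ)) • (y*x*(y*(x*y) - x*(y*x))*x*y*x)
      + ((-1 : ℂ)*β^1 + (1 : ℂ)*β^4 + (-2 : ℂ)*α^1*β^2) • (y*x*(y*(x*y) - x*(y*x))*y)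
      + ((1 : ℂ)*β^2 + (1 : ℂ)*α^1*β^3 + (-1 : ℂ)*α^2*β^1) • (y*x*(y*(x*y) - x*(y*x))*y*x)
      + ((-1 : ℂ)*β^3 + (1 : ℂ)*α^1*β^1) • (y*x*(y*(x*y) - x*(y*x))*y*x*x)
      + ((-1 : ℂ)*β^1 + (1 : ℂ)*β^4 + (-2 : ℂ)*α^1*β^2) • (y*x*x*(y*(x*y) - x*(y*x)))
      + ((1 : ℂ)*β^2 + (1 : ℂ)*α^1*β^3 + (-1 : ℂ)*α^2*β^1) • (y*x*x*(y*(x*y) - x*(y*x))*x)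
      + ((-1 : ℂ)*β^3 + (1 : ℂ)*α^1*β^1) • (y*x*x*(y*(x*y) - x*(y*x))*x*x)
      + ((-1 : ℂ)) • (y*x*x*(y*(x*y) - x*(y*x))*x*y)
      + ((1 : ℂ)) • (y*x*x*y*x*(y*(x*y) - x*(y*x)))
      + ((-1 : ℂ)*β^3 + (1 : ℂ)*α^1*β^1) • (y*y*(x*(x*x) - (α•(x*x)+β•x+1)))) := by
    simp only [R0elt, pow_succ, pow_zero, one_mul, Algebra.algebraMap_eq_smul_one, mul_add, add_mul, sub_mul, mul_sub, smul_add, smul_sub, smul_mul_assoc, mul_smul_comm, smul_smul, mul_one, mul_assoc]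
    module
  rw [key]
  simp only [hx, hy, hb, mul_zero, zero_mul, smul_zero, add_zero]

lemma cert_R0x {A : Type*} [Ring A] [Algebra ℂ A] (α β : ℂ) (x y : A)
    (hx : x*(x*x) - (α•(x*x)+β•x+1) = 0)
    (hy : y*(y*y) - (α•(y*y)+β•y+1) = 0)
    (hb : y*(x*y) - x*(y*x) = 0) :
    R0elt ℂ α β x y * x = x * R0elt ℂ α β x y := by
  have key : R0elt ℂ α β x y * x = x * R0elt ℂ α β x y +
    (((2 : ℂ)*α^1 + (-1 : ℂ)*α^1*β^3 + (2 : ℂ)*α^2*β^1) • ((x*(x*x) - (α•(x*x)+β•x+1))*y)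
      + ((-1 : ℂ) + (-1 : ℂ)*α^1*β^1 + (-1 : ℂ)*α^2*β^2 + (1 : ℂ)*α^3) • ((x*(x*x) - (α•(x*x)+β•x+1))*y*x)
      + ((1 : ℂ)*α^1*β^2 + (-1 : ℂ)*α^2) • ((x*(x*x) - (α•(x*x)+β•x+1))*y*x*x)
      + ((-1 : ℂ) + (1 : ℂ)*β^3 + (-2 : ℂ)*α^1*β^1) • ((x*(x*x) - (α•(x*x)+β•x+1))*y*y)
      + ((1 : ℂ)*β^1 + (1 : ℂ)*α^1*β^2 + (-1 : ℂ)*α^2) • ((x*(x*x) - (α•(x*x)+β•x+1))*y*y*x)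
      + ((-1 : ℂ)*β^2 + (1 : ℂ)*α^1) • ((x*(x*x) - (α•(x*x)+β•x+1))*y*y*x*x)
      + ((1 : ℂ)) • ((y*(x*y) - x*(y*x))*x*y)
      + ((-1 : ℂ)*α^1*β^2 + (1 : ℂ)*α^2) • (x*x*y*(x*(x*x) - (α•(x*x)+β•x+1)))
      + ((1 : ℂ)*β^2 + (-1 : ℂ)*α^1) • (x*x*y*y*(x*(x*x) - (α•(x*x)+β•x+1)))
      + ((1 : ℂ) + (1 : ℂ)*α^1*β^1 + (1 : ℂ)*α^2*β^2 + (-1 : ℂ)*α^3) • (x*y*(x*(x*x) - (α•(x*x)+β•x+1)))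
      + ((-1 : ℂ)*β^1 + (-1 : ℂ)*α^1*β^2 + (1 : ℂ)*α^2) • (x*y*y*(x*(x*x) - (α•(x*x)+β•x+1)))
      + ((-2 : ℂ)*α^1 + (1 : ℂ)*α^1*β^3 + (-2 : ℂ)*α^2*β^1) • (y*(x*(x*x) - (α•(x*x)+β•x+1)))
      + ((-1 : ℂ)) • (y*x*(y*(x*y) - x*(y*x)))
      + ((1 : ℂ) + (-1 : ℂ)*β^3 + (2 : ℂ)*α^1*β^1) • (y*y*(x*(x*x) - (α•(x*x)+β•x+1)))) := by
    simp only [R0elt, pow_succ, pow_zero, one_mul, Algebra.algebraMap_eq_smul_one, mul_add, add_mul, sub_mul, mul_sub, smul_add, smul_sub, smul_mul_assoc, mul_smul_comm, smul_smul, mul_one, mul_assoc]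
    module
  rw [key]
  simp only [hx, hy, hb, mul_zero, zero_mul, smul_zero, add_zero]
set_option maxHeartbeats 4000000 in
set_option maxRecDepth 16000 in
lemma cert_R0y {A : Type*} [Ring A] [Algebra ℂ A] (α β : ℂ) (x y : A)
    (hx : x*(x*x) - (α•(x*x)+β•x+1) = 0)
    (hy : y*(y*y) - (α•(y*y)+β•y+1) = 0)
    (hb : y*(x*y) - x*(y*x) = 0) :
    R0elt ℂ α β x y * y = x * R0elt ℂ α β x y := by
  have key : R0elt ℂ α β x y * y = x * R0elt ℂ α β x y +
    (((2 : ℂ)*β^1 + (-1 : ℂ)*β^4 + (3 : ℂ)*α^1*β^2 + (-1 : ℂ)*α^2) • ((x*(x*x) - (α•(x*x)+β•x+1)))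
      + ((1 : ℂ)*β^3 + (-1 : ℂ)*α^1*β^1) • ((x*(x*x) - (α•(x*x)+β•x+1))*x*y)
      + ((-1 : ℂ)*β^2 + (2 : ℂ)*α^1 + (-1 : ℂ)*α^1*β^3 + (2 : ℂ)*α^2*β^1) • ((x*(x*x) - (α•(x*x)+β•x+1))*y)
      + ((2 : ℂ)*α^1 + (-1 : ℂ)*α^1*β^3 + (2 : ℂ)*α^2*β^1) • ((x*(x*x) - (α•(x*x)+β•x+1))*y*x*x*y)
      + ((-1 : ℂ)) • ((x*(x*x) - (α•(x*x)+β•x+1))*y*x*x*y*y)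
      + ((-1 : ℂ) + (-1 : ℂ)*α^1*β^1) • ((x*(x*x) - (α•(x*x)+β•x+1))*y*y)
      + ((1 : ℂ)*β^1) • ((x*(x*x) - (α•(x*x)+β•x+1))*y*y*x)
      + ((-2 : ℂ)*β^1 + (1 : ℂ)*β^4 + (-3 : ℂ)*α^1*β^2 + (1 : ℂ)*α^2) • ((y*(y*y) - (α•(y*y)+β•y+1)))
      + ((-1 : ℂ)*α^1*β^2 + (3 : ℂ)*α^2 + (-1 : ℂ)*α^2*β^3 + (2 : ℂ)*α^3*β^1) • ((y*(x*y) - x*(y*x)))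
      + ((-2 : ℂ)*α^1 + (1 : ℂ)*α^1*β^3 + (-2 : ℂ)*α^2*β^1) • ((y*(x*y) - x*(y*x))*x)
      + ((-1 : ℂ)*β^1 + (1 : ℂ)*β^4 + (-2 : ℂ)*α^1*β^2) • ((y*(x*y) - x*(y*x))*x*x*y)
      + ((-1 : ℂ)*α^1*β^1) • ((y*(x*y) - x*(y*x))*x*y)
      + ((-1 : ℂ)*α^1 + (1 : ℂ)*α^1*β^3 + (-2 : ℂ)*α^2*β^1) • ((y*(x*y) - x*(y*x))*x*y*x*y)
      + ((1 : ℂ) + (-1 : ℂ)*β^3 + (2 : ℂ)*α^1*β^1) • ((y*(x*y) - x*(y*x))*x*y*x*y*x)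
      + ((1 : ℂ)*β^1) • ((y*(x*y) - x*(y*x))*x*y*y)
      + ((-1 : ℂ)*α^1*β^1 + (-1 : ℂ)*α^2*β^2 + (1 : ℂ)*α^3) • (x*(x*(x*x) - (α•(x*x)+β•x+1))*y*x*x*y)
      + ((1 : ℂ)*β^2 + (-2 : ℂ)*α^1 + (1 : ℂ)*α^1*β^3 + (-2 : ℂ)*α^2*β^1) • (x*(y*(y*y) - (α•(y*y)+β•y+1)))
      + ((-1 : ℂ)*β^2 + (1 : ℂ)*β^5 + (-3 : ℂ)*α^1 + (-2 : ℂ)*α^1*β^3 + (-2 : ℂ)*α^2*β^1 + (-1 : ℂ)*α^3*β^2 + (1 : ℂ)*α^4) • (x*(y*(x*y) - x*(y*x)))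
      + ((1 : ℂ) + (1 : ℂ)*α^1*β^4 + (-1 : ℂ)*α^2*β^2 + (-1 : ℂ)*α^3) • (x*(y*(x*y) - x*(y*x))*x)
      + ((1 : ℂ)*β^1 + (-1 : ℂ)*β^4 + (2 : ℂ)*α^1*β^2) • (x*(y*(x*y) - x*(y*x))*x*x)
      + ((1 : ℂ)*β^2 + (1 : ℂ)*α^1*β^3 + (-1 : ℂ)*α^2*β^1) • (x*(y*(x*y) - x*(y*x))*x*x*y)
      + ((-2 : ℂ)*α^2 + (1 : ℂ)*α^2*β^3 + (-2 : ℂ)*α^3*β^1) • (x*(y*(x*y) - x*(y*x))*x*y)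
      + ((1 : ℂ)*α^1 + (-1 : ℂ)*α^1*β^3 + (2 : ℂ)*α^2*β^1) • (x*(y*(x*y) - x*(y*x))*x*y*x)
      + ((1 : ℂ)*α^1*β^1 + (1 : ℂ)*α^2*β^2 + (-1 : ℂ)*α^3) • (x*(y*(x*y) - x*(y*x))*x*y*x*y)
      + ((-1 : ℂ)*β^1 + (-1 : ℂ)*α^1*β^2 + (1 : ℂ)*α^2) • (x*(y*(x*y) - x*(y*x))*x*y*x*y*x)
      + ((1 : ℂ)*α^1) • (x*(y*(x*y) - x*(y*x))*x*y*y)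
      + ((1 : ℂ)*α^1*β^2 + (-1 : ℂ)*α^2) • (x*x*(x*(x*x) - (α•(x*x)+β•x+1))*y*x*x*y)
      + ((1 : ℂ) + (-1 : ℂ)*β^3 + (2 : ℂ)*α^1*β^1) • (x*x*(y*(y*y) - (α•(y*y)+β•y+1)))
      + ((1 : ℂ) + (1 : ℂ)*β^3 + (1 : ℂ)*α^1*β^1 + (1 : ℂ)*α^1*β^4 + (-1 : ℂ)*α^3) • (x*x*(y*(x*y) - x*(y*x)))
      + ((1 : ℂ)*α^2 + (1 : ℂ)*α^2*β^3 + (-1 : ℂ)*α^3*β^1) • (x*x*(y*(x*y) - x*(y*x))*x)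
      + ((-1 : ℂ)*β^2 + (-1 : ℂ)*α^1*β^3 + (1 : ℂ)*α^2*β^1) • (x*x*(y*(x*y) - x*(y*x))*x*x)
      + ((-1 : ℂ)*β^3 + (1 : ℂ)*α^1*β^1) • (x*x*(y*(x*y) - x*(y*x))*x*x*y)
      + ((2 : ℂ)*α^1 + (-1 : ℂ)*α^1*β^3 + (3 : ℂ)*α^2*β^1 + (1 : ℂ)*α^3*β^2 + (-1 : ℂ)*α^4) • (x*x*(y*(x*y) - x*(y*x))*x*y)
      + ((-1 : ℂ)*α^1*β^1 + (-1 : ℂ)*α^2*β^2 + (1 : ℂ)*α^3) • (x*x*(y*(x*y) - x*(y*x))*x*y*x)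
      + ((-1 : ℂ)*α^1*β^2 + (1 : ℂ)*α^2) • (x*x*(y*(x*y) - x*(y*x))*x*y*x*y)
      + ((1 : ℂ)*β^2 + (-1 : ℂ)*α^1) • (x*x*(y*(x*y) - x*(y*x))*x*y*x*y*x)
      + ((-1 : ℂ)) • (x*x*(y*(x*y) - x*(y*x))*x*y*y)
      + ((-1 : ℂ)*β^4 + (1 : ℂ)*α^1*β^2) • (x*x*x*(y*(x*y) - x*(y*x)))
      + ((-1 : ℂ)*α^1*β^3 + (1 : ℂ)*α^2*β^1) • (x*x*x*(y*(x*y) - x*(y*x))*x)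
      + ((1 : ℂ)*β^3 + (-1 : ℂ)*α^1*β^1) • (x*x*x*(y*(x*y) - x*(y*x))*x*x)
      + ((-1 : ℂ)*α^1*β^1 + (-2 : ℂ)*α^2*β^2 + (2 : ℂ)*α^3) • (x*x*x*(y*(x*y) - x*(y*x))*x*y)
      + ((1 : ℂ)*α^1*β^2 + (-1 : ℂ)*α^2) • (x*x*x*(y*(x*y) - x*(y*x))*x*y*x)
      + ((1 : ℂ)*α^1*β^2 + (-1 : ℂ)*α^2) • (x*x*x*x*(y*(x*y) - x*(y*x))*x*y)
      + ((1 : ℂ)*β^3 + (-1 : ℂ)*α^1*β^1) • (x*x*x*x*y*(x*(x*x) - (α•(x*x)+β•x+1)))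
      + ((-1 : ℂ)*α^1*β^2 + (1 : ℂ)*α^2) • (x*x*x*x*y*x*(y*(x*y) - x*(y*x)))
      + ((-1 : ℂ)*β^2 + (-1 : ℂ)*α^1*β^3 + (1 : ℂ)*α^2*β^1) • (x*x*x*y*(x*(x*x) - (α•(x*x)+β•x+1)))
      + ((-1 : ℂ)*β^3 + (1 : ℂ)*α^1*β^1) • (x*x*x*y*(x*(x*x) - (α•(x*x)+β•x+1))*y)
      + ((-1 : ℂ)*α^1*β^2 + (1 : ℂ)*α^2) • (x*x*x*y*(x*(x*x) - (α•(x*x)+β•x+1))*y*x)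
      + ((1 : ℂ)*β^2 + (-1 : ℂ)*α^1) • (x*x*x*y*(x*(x*x) - (α•(x*x)+β•x+1))*y*x*x)
      + ((1 : ℂ)*α^1*β^1 + (2 : ℂ)*α^2*β^2 + (-2 : ℂ)*α^3) • (x*x*x*y*x*(y*(x*y) - x*(y*x)))
      + ((-1 : ℂ)*α^1*β^2 + (1 : ℂ)*α^2) • (x*x*x*y*x*(y*(x*y) - x*(y*x))*x)
      + ((-1 : ℂ)*α^1*β^2 + (1 : ℂ)*α^2) • (x*x*x*y*x*x*(y*(x*y) - x*(y*x)))
      + ((1 : ℂ)*β^2 + (-1 : ℂ)*α^1) • (x*x*x*y*x*x*(y*(x*y) - x*(y*x))*x)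
      + ((1 : ℂ)*β^1 + (-1 : ℂ)*β^4 + (2 : ℂ)*α^1*β^2) • (x*x*y*(x*(x*x) - (α•(x*x)+β•x+1)))
      + ((1 : ℂ)*β^2 + (1 : ℂ)*α^1*β^3 + (-1 : ℂ)*α^2*β^1) • (x*x*y*(x*(x*x) - (α•(x*x)+β•x+1))*y)
      + ((1 : ℂ) + (1 : ℂ)*α^1*β^1 + (1 : ℂ)*α^2*β^2 + (-1 : ℂ)*α^3) • (x*x*y*(x*(x*x) - (α•(x*x)+β•x+1))*y*x)
      + ((-1 : ℂ)*β^1 + (-1 : ℂ)*α^1*β^2 + (1 : ℂ)*α^2) • (x*x*y*(x*(x*x) - (α•(x*x)+β•x+1))*y*x*x)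
      + ((-1 : ℂ)*β^2 + (1 : ℂ)*α^1) • (x*x*y*(x*(x*x) - (α•(x*x)+β•x+1))*y*x*x*y)
      + ((-1 : ℂ)*β^1 + (-1 : ℂ)*α^1*β^2 + (1 : ℂ)*α^2) • (x*x*y*(y*(x*y) - x*(y*x)))
      + ((-2 : ℂ)*α^1 + (1 : ℂ)*α^1*β^3 + (-3 : ℂ)*α^2*β^1 + (-1 : ℂ)*α^3*β^2 + (1 : ℂ)*α^4) • (x*x*y*x*(y*(x*y) - x*(y*x)))
      + ((1 : ℂ)*α^1*β^1 + (1 : ℂ)*α^2*β^2 + (-1 : ℂ)*α^3) • (x*x*y*x*(y*(x*y) - x*(y*x))*x)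
      + ((1 : ℂ)*α^1*β^2 + (-1 : ℂ)*α^2) • (x*x*y*x*(y*(x*y) - x*(y*x))*x*y)
      + ((-1 : ℂ)*β^2 + (1 : ℂ)*α^1) • (x*x*y*x*(y*(x*y) - x*(y*x))*x*y*x)
      + ((1 : ℂ)) • (x*x*y*x*(y*(x*y) - x*(y*x))*y)
      + ((1 : ℂ) + (1 : ℂ)*α^1*β^1 + (1 : ℂ)*α^2*β^2 + (-1 : ℂ)*α^3) • (x*x*y*x*x*(y*(x*y) - x*(y*x)))
      + ((-1 : ℂ)*β^1 + (-1 : ℂ)*α^1*β^2 + (1 : ℂ)*α^2) • (x*x*y*x*x*(y*(x*y) - x*(y*x))*x)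
      + ((-1 : ℂ)*β^2 + (1 : ℂ)*α^1) • (x*x*y*x*x*(y*(x*y) - x*(y*x))*x*y)
      + ((1 : ℂ)*β^2 + (-1 : ℂ)*α^1) • (x*x*y*x*x*y*x*(y*(x*y) - x*(y*x)))
      + ((-1 : ℂ)*β^1 + (1 : ℂ)*β^4 + (-2 : ℂ)*α^1*β^2) • (x*y*(x*(x*x) - (α•(x*x)+β•x+1))*y)
      + ((-2 : ℂ)*α^1 + (1 : ℂ)*α^1*β^3 + (-2 : ℂ)*α^2*β^1) • (x*y*(x*(x*x) - (α•(x*x)+β•x+1))*y*x)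
      + ((1 : ℂ) + (-1 : ℂ)*β^3 + (2 : ℂ)*α^1*β^1) • (x*y*(x*(x*x) - (α•(x*x)+β•x+1))*y*x*x)
      + ((1 : ℂ)*β^1 + (1 : ℂ)*α^1*β^2 + (-1 : ℂ)*α^2) • (x*y*(x*(x*x) - (α•(x*x)+β•x+1))*y*x*x*y)
      + ((1 : ℂ) + (2 : ℂ)*α^1*β^1 + (1 : ℂ)*α^2*β^2 + (-1 : ℂ)*α^3) • (x*y*(y*(x*y) - x*(y*x)))
      + ((2 : ℂ)*α^2 + (-1 : ℂ)*α^2*β^3 + (2 : ℂ)*α^3*β^1) • (x*y*x*(y*(x*y) - x*(y*x)))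
      + ((-1 : ℂ)*α^1 + (1 : ℂ)*α^1*β^3 + (-2 : ℂ)*α^2*β^1) • (x*y*x*(y*(x*y) - x*(y*x))*x)
      + ((-1 : ℂ)*α^1*β^1 + (-1 : ℂ)*α^2*β^2 + (1 : ℂ)*α^3) • (x*y*x*(y*(x*y) - x*(y*x))*x*y)
      + ((1 : ℂ)*β^1 + (1 : ℂ)*α^1*β^2 + (-1 : ℂ)*α^2) • (x*y*x*(y*(x*y) - x*(y*x))*x*y*x)
      + ((-1 : ℂ)*α^1) • (x*y*x*(y*(x*y) - x*(y*x))*y)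
      + ((-2 : ℂ)*α^1 + (1 : ℂ)*α^1*β^3 + (-2 : ℂ)*α^2*β^1) • (x*y*x*x*(y*(x*y) - x*(y*x)))
      + ((1 : ℂ) + (-1 : ℂ)*β^3 + (2 : ℂ)*α^1*β^1) • (x*y*x*x*(y*(x*y) - x*(y*x))*x)
      + ((1 : ℂ)*β^1 + (1 : ℂ)*α^1*β^2 + (-1 : ℂ)*α^2) • (x*y*x*x*(y*(x*y) - x*(y*x))*x*y)
      + ((-1 : ℂ)*β^1 + (-1 : ℂ)*α^1*β^2 + (1 : ℂ)*α^2) • (x*y*x*x*y*x*(y*(x*y) - x*(y*x)))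
      + ((-1 : ℂ)*β^1) • (y*(x*(x*x) - (α•(x*x)+β•x+1))*y*x)
      + ((-1 : ℂ) + (1 : ℂ)*β^3 + (-2 : ℂ)*α^1*β^1) • (y*(x*(x*x) - (α•(x*x)+β•x+1))*y*x*x*y)
      + ((1 : ℂ)*β^2 + (-2 : ℂ)*α^1 + (1 : ℂ)*α^1*β^3 + (-2 : ℂ)*α^2*β^1) • (y*(y*(x*y) - x*(y*x)))
      + ((1 : ℂ)*α^1*β^1) • (y*x*(y*(x*y) - x*(y*x)))
      + ((1 : ℂ)*α^1 + (-1 : ℂ)*α^1*β^3 + (2 : ℂ)*α^2*β^1) • (y*x*(y*(x*y) - x*(y*x))*x*y)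
      + ((-1 : ℂ) + (1 : ℂ)*β^3 + (-2 : ℂ)*α^1*β^1) • (y*x*(y*(x*y) - x*(y*x))*x*y*x)
      + ((-1 : ℂ)*β^1) • (y*x*(y*(x*y) - x*(y*x))*y)
      + ((-1 : ℂ)*β^1) • (y*x*x*(y*(x*y) - x*(y*x)))
      + ((-1 : ℂ) + (1 : ℂ)*β^3 + (-2 : ℂ)*α^1*β^1) • (y*x*x*(y*(x*y) - x*(y*x))*x*y)
      + ((1 : ℂ) + (-1 : ℂ)*β^3 + (2 : ℂ)*α^1*β^1) • (y*x*x*y*x*(y*(x*y) - x*(y*x)))) := by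
    simp only [R0elt, pow_succ, pow_zero, one_mul, Algebra.algebraMap_eq_smul_one, mul_add, add_mul, sub_mul, mul_sub, smul_add, smul_sub, smul_mul_assoc, mul_smul_comm, smul_smul, mul_one, mul_assoc]
    module
  rw [key]
  simp only [hx, hy, hb, mul_zero, zero_mul, smul_zero, add_zero]

section Statement5Aux

variable (α β : ℂ)

private lemma hb_cube (i : Fin (3 - 1)) :
    hb ℂ α β 3 i ^ 3 = α • hb ℂ α β 3 i ^ 2 + β • hb ℂ α β 3 i + 1 := by
  have h := RingQuot.mkAlgHom_rel ℂ (cubicRel.cube (R := ℂ) (α := α) (β := β) (n := 3) i)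
  simpa only [hb, map_pow, map_add, map_smul, map_one] using h

private lemma bOne_cube :
    bOne α β ^ 3 = α • bOne α β ^ 2 + β • bOne α β + 1 := hb_cube α β ⟨0, by omega⟩

private lemma bTwo_cube :
    bTwo α β ^ 3 = α • bTwo α β ^ 2 + β • bTwo α β + 1 := hb_cube α β ⟨1, by omega⟩

private lemma braid_rel :
    bOne α β * bTwo α β * bOne α β = bTwo α β * bOne α β * bTwo α β := by
  have h := braid_mk_eq_one (m := 3 - 1)
    (Or.inr ⟨⟨0, by omega⟩, ⟨1, by omega⟩, rfl, rfl⟩)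
  simp only [map_mul, map_inv] at h
  rw [mul_inv_eq_one] at h
  have h2 := congrArg (MonoidAlgebra.of ℂ (BraidGroup 3)) h
  simp only [map_mul] at h2
  have h3 := congrArg (RingQuot.mkAlgHom ℂ (cubicRel ℂ α β 3)) h2
  simp only [map_mul] at h3
  exact h3

private lemma hx0 :
    bOne α β * (bOne α β * bOne α β)
      - (α • (bOne α β * bOne α β) + β • bOne α β + 1) = 0 := by
  rw [sub_eq_zero, ← mul_assoc, ← pow_two, ← pow_succ, bOne_cube, pow_two]

private lemma hy0 :
    bTwo α β * (bTwo α β * bTwo α β)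
      - (α • (bTwo α β * bTwo α β) + β • bTwo α β + 1) = 0 := by
  rw [sub_eq_zero, ← mul_assoc, ← pow_two, ← pow_succ, bTwo_cube, pow_two]

private lemma hbr0 :
    bTwo α β * (bOne α β * bTwo α β) - bOne α β * (bTwo α β * bOne α β) = 0 := by
  rw [sub_eq_zero, ← mul_assoc, ← braid_rel, mul_assoc]

private lemma id_yR0 : bTwo α β * rZero α β = bOne α β * rZero α β :=
  cert_yR0 α β _ _ (hx0 α β) (hy0 α β) (hbr0 α β)

private lemma id_R0x : rZero α β * bOne α β = bOne α β * rZero α β :=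
  cert_R0x α β _ _ (hx0 α β) (hy0 α β) (hbr0 α β)

private lemma id_R0y : rZero α β * bTwo α β = bOne α β * rZero α β :=
  cert_R0y α β _ _ (hx0 α β) (hy0 α β) (hbr0 α β)

private lemma hb_mem_adjoin (i : Fin (3 - 1)) :
    hb ℂ α β 3 i ∈ Algebra.adjoin ℂ {bOne α β, bTwo α β} := by
  rcases i with ⟨iv, hiv⟩
  interval_cases iv
  · exact Algebra.subset_adjoin (Set.mem_insert _ _)
  · exact Algebra.subset_adjoin (Set.mem_insert_of_mem _ rfl)

private lemma ofg_mem_adjoin (g : BraidGroup 3) :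
    RingQuot.mkAlgHom ℂ (cubicRel ℂ α β 3) (MonoidAlgebra.of ℂ (BraidGroup 3) g)
      ∈ Algebra.adjoin ℂ {bOne α β, bTwo α β} := by
  obtain ⟨w, rfl⟩ := PresentedGroup.mk_surjective (braidRels (3 - 1)) g
  induction w using FreeGroup.induction_on with
  | C1 => simpa only [map_one] using Subalgebra.one_mem _
  | of i => exact hb_mem_adjoin α β i
  | inv_of i _ =>
      have hmap : (PresentedGroup.mk (braidRels (3 - 1)))
            ((FreeGroup.of i : FreeGroup (Fin (3 - 1)))⁻¹)
          = ((PresentedGroup.mk (braidRels (3 - 1))) (FreeGroup.of i : FreeGroup (Fin (3 - 1))))⁻¹ :=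
        map_inv _ _
      rw [hmap]
      set g : BraidGroup 3 :=
        (PresentedGroup.mk (braidRels (3 - 1))) (FreeGroup.of i : FreeGroup (Fin (3 - 1))) with hgdef
      have htg : RingQuot.mkAlgHom ℂ (cubicRel ℂ α β 3)
          (MonoidAlgebra.of ℂ (BraidGroup 3) g) = hb ℂ α β 3 i := by rfl
      set t : CubicHecke ℂ α β 3 := hb ℂ α β 3 i with ht
      have hinv : t * (t * t - α • t - β • 1) = 1 := by
        have e : t * (t * t - α • t - β • 1) = t ^ 3 - α • t ^ 2 - β • t := by
          simp only [mul_sub, mul_smul_comm, mul_one, pow_succ, pow_zero, one_mul, mul_assoc]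
        rw [e, ht, hb_cube]
        module
      have hmt : RingQuot.mkAlgHom ℂ (cubicRel ℂ α β 3)
          (MonoidAlgebra.of ℂ (BraidGroup 3) g⁻¹) * t = 1 := by
        rw [← htg, ← map_mul, ← map_mul, inv_mul_cancel, map_one, map_one]
      have key : RingQuot.mkAlgHom ℂ (cubicRel ℂ α β 3)
          (MonoidAlgebra.of ℂ (BraidGroup 3) g⁻¹) = t * t - α • t - β • 1 := by
        calc RingQuot.mkAlgHom ℂ (cubicRel ℂ α β 3)
              (MonoidAlgebra.of ℂ (BraidGroup 3) g⁻¹)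
            = RingQuot.mkAlgHom ℂ (cubicRel ℂ α β 3)
                (MonoidAlgebra.of ℂ (BraidGroup 3) g⁻¹)
              * (t * (t * t - α • t - β • 1)) := by rw [hinv, mul_one]
          _ = (RingQuot.mkAlgHom ℂ (cubicRel ℂ α β 3)
                (MonoidAlgebra.of ℂ (BraidGroup 3) g⁻¹) * t)
              * (t * t - α • t - β • 1) := by rw [mul_assoc]
          _ = t * t - α • t - β • 1 := by rw [hmt, one_mul]
      have hmem : t ∈ Algebra.adjoin ℂ {bOne α β, bTwo α β} := hb_mem_adjoin α β i
      rw [key]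
      exact Subalgebra.sub_mem _ (Subalgebra.sub_mem _ (mul_mem hmem hmem)
        (Subalgebra.smul_mem _ hmem α)) (Subalgebra.smul_mem _ (Subalgebra.one_mem _) β)
  | mul u v hu hv =>
      rw [map_mul, map_mul, map_mul]
      exact mul_mem hu hv

private lemma mem_adjoin_top (a : CubicHecke ℂ α β 3) :
    a ∈ Algebra.adjoin ℂ {bOne α β, bTwo α β} := by
  obtain ⟨p, rfl⟩ := RingQuot.mkAlgHom_surjective ℂ (cubicRel ℂ α β 3) a
  induction p using MonoidAlgebra.induction with
  | zero => simpa only [map_zero] using Subalgebra.zero_mem _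
  | single_add g r f _ _ ih =>
      rw [map_add]
      refine Subalgebra.add_mem _ ?_ ih
      have hs : (MonoidAlgebra.single g r : MonoidAlgebra ℂ (BraidGroup 3))
          = r • MonoidAlgebra.of ℂ (BraidGroup 3) g := by
        rw [MonoidAlgebra.of_apply, MonoidAlgebra.smul_single, smul_eq_mul, mul_one]
      rw [hs, map_smul]
      exact Subalgebra.smul_mem _ (ofg_mem_adjoin α β g) r

end Statement5Aux

section Statement5Main

variable (α β : ℂ)

private noncomputable abbrev Mspan (α β : ℂ) : Submodule ℂ (CubicHecke ℂ α β 3) :=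
  Submodule.span ℂ {rZero α β, bOne α β * rZero α β, bOne α β ^ 2 * rZero α β}

private lemma mem0 : rZero α β ∈ Mspan α β :=
  Submodule.subset_span (Set.mem_insert _ _)

private lemma mem1 : bOne α β * rZero α β ∈ Mspan α β :=
  Submodule.subset_span (Set.mem_insert_of_mem _ (Set.mem_insert _ _))

private lemma mem2 : bOne α β ^ 2 * rZero α β ∈ Mspan α β :=
  Submodule.subset_span (Set.mem_insert_of_mem _ (Set.mem_insert_of_mem _ rfl))

private lemma mem3 : bOne α β ^ 3 * rZero α β ∈ Mspan α β := by
  rw [bOne_cube, add_mul, add_mul, smul_mul_assoc, smul_mul_assoc, one_mul]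
  exact Submodule.add_mem _ (Submodule.add_mem _
    (Submodule.smul_mem _ _ (mem2 α β)) (Submodule.smul_mem _ _ (mem1 α β))) (mem0 α β)

private lemma mulx_mem {s : CubicHecke ℂ α β 3} (hs : s ∈ Mspan α β) :
    bOne α β * s ∈ Mspan α β := by
  induction hs using Submodule.span_induction with
  | mem s hs =>
      simp only [Set.mem_insert_iff, Set.mem_singleton_iff] at hs
      rcases hs with h | h | h
      · rw [h]; exact mem1 α β
      · rw [h, ← mul_assoc, ← pow_two]; exact mem2 α β
      · rw [h, ← mul_assoc, ← pow_succ']; exact mem3 α β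
  | zero => simpa only [mul_zero] using Submodule.zero_mem _
  | add a b _ _ iha ihb => rw [mul_add]; exact Submodule.add_mem _ iha ihb
  | smul c a _ iha => rw [mul_smul_comm]; exact Submodule.smul_mem _ _ iha

private lemma comm_x : rZero α β * bOne α β = bOne α β * rZero α β := id_R0x α β

private lemma comm_x2 : rZero α β * bOne α β ^ 2 = bOne α β ^ 2 * rZero α β := by
  rw [pow_two, ← mul_assoc, comm_x, mul_assoc, comm_x, ← mul_assoc]

private lemma muly_mem {s : CubicHecke ℂ α β 3} (hs : s ∈ Mspan α β) :
    bTwo α β * s ∈ Mspan α β := by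
  induction hs using Submodule.span_induction with
  | mem s hs =>
      simp only [Set.mem_insert_iff, Set.mem_singleton_iff] at hs
      rcases hs with h | h | h
      · rw [h, id_yR0]; exact mem1 α β
      · rw [h, ← comm_x, ← mul_assoc, id_yR0, mul_assoc, comm_x, ← mul_assoc, ← pow_two]
        exact mem2 α β
      · rw [h, ← comm_x2, ← mul_assoc, id_yR0, mul_assoc, comm_x2, ← mul_assoc, ← pow_succ']
        exact mem3 α β
  | zero => simpa only [mul_zero] using Submodule.zero_mem _
  | add a b _ _ iha ihb => rw [mul_add]; exact Submodule.add_mem _ iha ihb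
  | smul c a _ iha => rw [mul_smul_comm]; exact Submodule.smul_mem _ _ iha

private lemma mul_left_mem (a : CubicHecke ℂ α β 3) {s : CubicHecke ℂ α β 3}
    (hs : s ∈ Mspan α β) : a * s ∈ Mspan α β := by
  induction mem_adjoin_top α β a using Algebra.adjoin_induction generalizing s with
  | mem t ht =>
      rcases ht with h | h
      · rw [h]; exact mulx_mem α β hs
      · rw [h]; exact muly_mem α β hs
  | algebraMap r => rw [← Algebra.smul_def]; exact Submodule.smul_mem _ _ hs
  | add u v _ _ ihu ihv => rw [add_mul]; exact Submodule.add_mem _ (ihu hs) (ihv hs)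
  | mul u v _ _ ihu ihv => rw [mul_assoc]; exact ihu (ihv hs)

private lemma mulxr_mem {s : CubicHecke ℂ α β 3} (hs : s ∈ Mspan α β) :
    s * bOne α β ∈ Mspan α β := by
  induction hs using Submodule.span_induction with
  | mem s hs =>
      simp only [Set.mem_insert_iff, Set.mem_singleton_iff] at hs
      rcases hs with h | h | h
      · rw [h, comm_x]; exact mem1 α β
      · rw [h, mul_assoc, comm_x, ← mul_assoc, ← pow_two]; exact mem2 α β
      · rw [h, mul_assoc, comm_x, ← mul_assoc, ← pow_succ]; exact mem3 α β
  | zero => simpa only [zero_mul] using Submodule.zero_mem _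
  | add a b _ _ iha ihb => rw [add_mul]; exact Submodule.add_mem _ iha ihb
  | smul c a _ iha => rw [smul_mul_assoc]; exact Submodule.smul_mem _ _ iha

private lemma mulyr_mem {s : CubicHecke ℂ α β 3} (hs : s ∈ Mspan α β) :
    s * bTwo α β ∈ Mspan α β := by
  induction hs using Submodule.span_induction with
  | mem s hs =>
      simp only [Set.mem_insert_iff, Set.mem_singleton_iff] at hs
      rcases hs with h | h | h
      · rw [h, id_R0y]; exact mem1 α β
      · rw [h, mul_assoc, id_R0y, ← mul_assoc, ← pow_two]; exact mem2 α β
      · rw [h, mul_assoc, id_R0y, ← mul_assoc, ← pow_succ]; exact mem3 α β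
  | zero => simpa only [zero_mul] using Submodule.zero_mem _
  | add a b _ _ iha ihb => rw [add_mul]; exact Submodule.add_mem _ iha ihb
  | smul c a _ iha => rw [smul_mul_assoc]; exact Submodule.smul_mem _ _ iha

private lemma mul_right_mem (a : CubicHecke ℂ α β 3) {s : CubicHecke ℂ α β 3}
    (hs : s ∈ Mspan α β) : s * a ∈ Mspan α β := by
  induction mem_adjoin_top α β a using Algebra.adjoin_induction generalizing s with
  | mem t ht =>
      rcases ht with h | h
      · rw [h]; exact mulxr_mem α β hs
      · rw [h]; exact mulyr_mem α β hs
  | algebraMap r => rw [← Algebra.commutes, ← Algebra.smul_def]; exact Submodule.smul_mem _ _ hs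
  | add u v _ _ ihu ihv => rw [mul_add]; exact Submodule.add_mem _ (ihu hs) (ihv hs)
  | mul u v _ _ ihu ihv => rw [← mul_assoc]; exact ihv (ihu hs)

end Statement5Main

/-- The two-sided ideal of `H(Q_{α,β},3)` generated by `R₀` coincides with the complex
linear span of `R₀`, `b₁·R₀` and `b₁²·R₀`. -/
theorem statement_5 (α β : ℂ) (w : CubicHecke ℂ α β 3) :
    w ∈ TwoSidedIdeal.span {rZero α β} ↔
      w ∈ Submodule.span ℂ
        {rZero α β, bOne α β * rZero α β, bOne α β ^ 2 * rZero α β} := by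
  constructor
  · intro h
    have hmem := TwoSidedIdeal.mem_span_iff.mp h
      (TwoSidedIdeal.mk' (Mspan α β : Set (CubicHecke ℂ α β 3))
        (Submodule.zero_mem _)
        (fun {u v} hu hv => Submodule.add_mem _ hu hv)
        (fun {u} hu => Submodule.neg_mem _ hu)
        (fun {u v} hv => mul_left_mem α β u hv)
        (fun {u v} hu => mul_right_mem α β v hu))
      (by
        intro t ht
        rw [Set.mem_singleton_iff] at ht
        subst ht
        exact (TwoSidedIdeal.mem_mk' _ _ _ _ _ _ _).mpr (mem0 α β))
    rwa [TwoSidedIdeal.mem_mk'] at hmem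
  · intro h
    induction h using Submodule.span_induction with
    | mem s hs =>
        simp only [Set.mem_insert_iff, Set.mem_singleton_iff] at hs
        rcases hs with hh | hh | hh
        · rw [hh]; exact TwoSidedIdeal.subset_span rfl
        · rw [hh]
          exact TwoSidedIdeal.mul_mem_left _ _ _ (TwoSidedIdeal.subset_span rfl)
        · rw [hh]
          exact TwoSidedIdeal.mul_mem_left _ _ _ (TwoSidedIdeal.subset_span rfl)
    | zero => exact TwoSidedIdeal.zero_mem _
    | add a b _ _ iha ihb => exact TwoSidedIdeal.add_mem _ iha ihb
    | smul c a _ iha =>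
        rw [Algebra.smul_def]
        exact TwoSidedIdeal.mul_mem_left _ _ _ iha
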